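/- Let M, M̂ be matrices with ‖M̂ − M‖_F ≤ ε, and suppose M = λ u vᵀ is rank one with ‖u‖=‖v‖=1 and λ>0. If û is the top left singular vector of M̂, then ‖M̂ û ûᵀ - M̂‖_F ≤ ‖M - M̂‖_F and hence ‖û ûᵀ M - M‖_F ≤ 2ε; consequently 1 − ⟨û,u⟩² ≤ 4ε²/λ². -/
import Mathlib

open Matrix

noncomputable def froNorm {m n : Type*} [Fintype m] [Fintype n] (A : Matrix m n ℝ) : ℝ :=
  Real.sqrt (∑ i, ∑ j, A i j ^ 2)

attribute [local instance] Matrix.frobeniusNormedAddCommGroup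

section Aux
variable {d p : ℕ}

lemma froNorm_eq (A : Matrix (Fin d) (Fin p) ℝ) : froNorm A = ‖A‖ := by
  rw [Matrix.frobenius_norm_def, ← Real.sqrt_eq_rpow, froNorm]
  congr 1
  refine Finset.sum_congr rfl fun i _ => Finset.sum_congr rfl fun j _ => ?_
  rw [show ((2:ℝ)) = ((2:ℕ):ℝ) by norm_num, Real.rpow_natCast]
  simp [Real.norm_eq_abs, sq_abs]

lemma proj_sq (w : Fin d → ℝ) (hw : ∑ i, w i * w i = 1) (A : Matrix (Fin d) (Fin p) ℝ) :
    (∑ i, ∑ j, (A - vecMulVec w w * A) i j ^ 2)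
      = (∑ i, ∑ j, A i j ^ 2) - ∑ j, (∑ k, w k * A k j) ^ 2 := by
  rw [Finset.sum_comm, Finset.sum_comm (f := fun i j => A i j ^ 2), ← Finset.sum_sub_distrib]
  refine Finset.sum_congr rfl fun j _ => ?_
  have hPA : ∀ i, (vecMulVec w w * A) i j = w i * (∑ k, w k * A k j) := by
    intro i
    simp [Matrix.mul_apply, vecMulVec_apply, Finset.mul_sum, mul_assoc]
  set c := ∑ k, w k * A k j with hc
  have : ∑ i, (A - vecMulVec w w * A) i j ^ 2
      = ∑ i, (A i j ^ 2 - 2 * c * (w i * A i j) + c ^ 2 * (w i * w i)) := by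
    refine Finset.sum_congr rfl fun i _ => ?_
    rw [Matrix.sub_apply, hPA i]
    ring
  rw [this]
  simp only [Finset.sum_add_distrib, Finset.sum_sub_distrib, ← Finset.mul_sum]
  rw [hw, ← hc]
  ring

lemma proj_contract (w : Fin d → ℝ) (hw : ∑ i, w i * w i = 1) (A : Matrix (Fin d) (Fin p) ℝ) :
    froNorm (A - vecMulVec w w * A) ≤ froNorm A := by
  unfold froNorm
  apply Real.sqrt_le_sqrt
  rw [proj_sq w hw A]
  have : (0:ℝ) ≤ ∑ j, (∑ k, w k * A k j) ^ 2 :=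
    Finset.sum_nonneg fun j _ => sq_nonneg _
  linarith

end Aux

theorem stmt_17 {d p : ℕ} (M Mh : Matrix (Fin d) (Fin p) ℝ)
    (u : Fin d → ℝ) (v : Fin p → ℝ) (lam ε : ℝ)
    (hu : ∑ i, u i * u i = 1) (hv : ∑ j, v j * v j = 1) (hlam : 0 < lam)
    (hM : M = lam • vecMulVec u v)
    (hε : froNorm (Mh - M) ≤ ε)
    (uh : Fin d → ℝ) (huh : ∑ i, uh i * uh i = 1)
    (hmin : ∀ w : Fin d → ℝ, (∑ i, w i * w i = 1) →
      froNorm (Mh - vecMulVec uh uh * Mh) ≤ froNorm (Mh - vecMulVec w w * Mh)) :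
    froNorm (vecMulVec uh uh * Mh - Mh) ≤ froNorm (M - Mh) ∧
      froNorm (vecMulVec uh uh * M - M) ≤ 2 * ε ∧
      1 - (∑ i, uh i * u i) ^ 2 ≤ 4 * ε ^ 2 / lam ^ 2 := by
  classical
  have hε0 : (0:ℝ) ≤ ε := le_trans (Real.sqrt_nonneg _) hε
  -- u uᵀ M = M
  have hPuM : vecMulVec u u * M = M := by
    ext i j
    simp only [Matrix.mul_apply, vecMulVec_apply, hM, Matrix.smul_apply, smul_eq_mul]
    have h1 : ∀ k, u i * u k * (lam * (u k * v j)) = (u k * u k) * (lam * (u i * v j)) := by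
      intro k; ring
    rw [Finset.sum_congr rfl fun k _ => h1 k, ← Finset.sum_mul, hu, one_mul]
  have hA : Mh - vecMulVec u u * Mh = (Mh - M) - vecMulVec u u * (Mh - M) := by
    rw [Matrix.mul_sub, hPuM]; abel
  have h1 : froNorm (Mh - vecMulVec uh uh * Mh) ≤ froNorm (Mh - M) :=
    calc froNorm (Mh - vecMulVec uh uh * Mh) ≤ froNorm (Mh - vecMulVec u u * Mh) := hmin u hu
      _ = froNorm ((Mh - M) - vecMulVec u u * (Mh - M)) := by rw [hA]
      _ ≤ froNorm (Mh - M) := proj_contract u hu _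
  -- goal 1
  have g1 : froNorm (vecMulVec uh uh * Mh - Mh) ≤ froNorm (M - Mh) := by
    rw [froNorm_eq, froNorm_eq, norm_sub_rev (vecMulVec uh uh * Mh), norm_sub_rev M]
    rw [froNorm_eq, froNorm_eq] at h1
    exact h1
  -- goal 2
  have g2 : froNorm (vecMulVec uh uh * M - M) ≤ 2 * ε := by
    have key : M - vecMulVec uh uh * M
        = ((M - Mh) - vecMulVec uh uh * (M - Mh)) + (Mh - vecMulVec uh uh * Mh) := by
      rw [Matrix.mul_sub]; abel
    have hMMh : froNorm (M - Mh) ≤ ε := by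
      rw [froNorm_eq, norm_sub_rev, ← froNorm_eq]; exact hε
    calc froNorm (vecMulVec uh uh * M - M)
        = ‖M - vecMulVec uh uh * M‖ := by rw [froNorm_eq, norm_sub_rev]
      _ = ‖((M - Mh) - vecMulVec uh uh * (M - Mh)) + (Mh - vecMulVec uh uh * Mh)‖ := by
          rw [key]
      _ ≤ ‖(M - Mh) - vecMulVec uh uh * (M - Mh)‖ + ‖Mh - vecMulVec uh uh * Mh‖ :=
          norm_add_le _ _
      _ = froNorm ((M - Mh) - vecMulVec uh uh * (M - Mh)) + froNorm (Mh - vecMulVec uh uh * Mh) := by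
          rw [froNorm_eq, froNorm_eq]
      _ ≤ froNorm (M - Mh) + froNorm (Mh - M) :=
          add_le_add (proj_contract uh huh _) h1
      _ ≤ ε + ε := add_le_add hMMh hε
      _ = 2 * ε := by ring
  refine ⟨g1, g2, ?_⟩
  -- goal 3
  set c : ℝ := ∑ i, uh i * u i with hc
  have hentry : ∀ i j, (vecMulVec uh uh * M - M) i j = lam * ((uh i * c - u i) * v j) := by
    intro i j
    simp only [Matrix.sub_apply, Matrix.mul_apply, vecMulVec_apply, hM, Matrix.smul_apply,
      smul_eq_mul]
    have h2 : ∀ k, uh i * uh k * (lam * (u k * v j)) = (uh k * u k) * (lam * uh i * v j) := by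
      intro k; ring
    rw [Finset.sum_congr rfl fun k _ => h2 k, ← Finset.sum_mul, ← hc]
    ring
  have hS : ∑ i, ∑ j, (vecMulVec uh uh * M - M) i j ^ 2 = lam ^ 2 * (1 - c ^ 2) := by
    simp_rw [hentry]
    have h3 : ∀ (i : Fin d) (j : Fin p), (lam * ((uh i * c - u i) * v j)) ^ 2
        = (lam ^ 2 * (uh i * c - u i) ^ 2) * (v j * v j) := by intro i j; ring
    simp_rw [h3, ← Finset.mul_sum, hv, mul_one]
    have h4 : ∀ i : Fin d, lam ^ 2 * (uh i * c - u i) ^ 2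
        = lam ^ 2 * (c ^ 2 * (uh i * uh i) - 2 * c * (uh i * u i) + u i * u i) := by
      intro i; ring
    simp_rw [h4]
    rw [← Finset.mul_sum]
    congr 1
    rw [Finset.sum_add_distrib, Finset.sum_sub_distrib, ← Finset.mul_sum, ← Finset.mul_sum,
      huh, hu, ← hc]
    ring
  have hSn : (0:ℝ) ≤ ∑ i, ∑ j, (vecMulVec uh uh * M - M) i j ^ 2 :=
    Finset.sum_nonneg fun i _ => Finset.sum_nonneg fun j _ => sq_nonneg _
  have hsq : lam ^ 2 * (1 - c ^ 2) ≤ (2 * ε) ^ 2 := by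
    rw [← hS, ← Real.sq_sqrt hSn]
    exact pow_le_pow_left₀ (Real.sqrt_nonneg _) g2 2
  rw [le_div_iff₀ (by positivity : (0:ℝ) < lam ^ 2)]
  nlinarith [hsq]
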